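/- Let F_{n,p} be the n×n matrix with F(i,j) = -1 if i = j+1, F(i,j) = 1 if j - i ≥ p-1, else 0. Then the sum of all principal minors of order n-k of F_{n,p} equals the number of compositions of n + kp - 2k with exactly k parts equal to p-1 and all other parts ≥ p. -/

import Mathlib

/-- The `n × n` Hessenberg matrix `F_{n,p}` with entries `-1` when `i = j + 1`,
`1` when `j - i ≥ p - 1`, and `0` otherwise. -/
def F (n p : ℕ) : Matrix (Fin n) (Fin n) ℤ := fun i j =>
  if (i : ℕ) = (j : ℕ) + 1 then -1
  else if (p : ℤ) - 1 ≤ (j : ℤ) - (i : ℤ) then 1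
  else 0

def Fent (p i j : ℕ) : ℤ :=
  if i = j + 1 then -1 else if (p : ℤ) - 1 ≤ (j : ℤ) - (i : ℤ) then 1 else 0

def ec (p : ℕ) : ℕ → ℕ → List ℕ → ℤ
  | r, _, [] => if p ≤ r then 1 else 0
  | r, b, a :: t => (if p ≤ r then ec p 1 a t else 0) + (if a = b + 1 then ec p (r + 1) a t else 0)

def pc (p : ℕ) : List ℕ → ℤ
  | [] => 1
  | a :: t => ec p 1 a t

lemma Fent_of_lt {p i j : ℕ} (hp : 1 ≤ p) (h : j + 2 ≤ i) : Fent p i j = 0 := by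
  unfold Fent
  rw [if_neg (by omega), if_neg (by push_cast; omega)]

lemma Fent_le {p x b : ℕ} (h : x ≤ b) :
    Fent p x b = if p ≤ b + 1 - x then 1 else 0 := by
  unfold Fent
  rw [if_neg (by omega)]
  congr 1
  simp only [eq_iff_iff]
  constructor <;> intro h' <;> [omega; push_cast] <;> omega

lemma Fent_gt {p a b : ℕ} (hp : 1 ≤ p) (h : b < a) :
    Fent p a b = if a = b + 1 then -1 else 0 := by
  unfold Fent
  by_cases hab : a = b + 1
  · simp [hab]
  · rw [if_neg hab, if_neg (by push_cast; omega), if_neg hab]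

def Qmat (p x b : ℕ) (rest : List ℕ) : Matrix (Fin (rest.length + 1)) (Fin (rest.length + 1)) ℤ :=
  fun i j => Fent p ((x :: rest).get i) ((b :: rest).get j)

def Pmat (p : ℕ) (l : List ℕ) : Matrix (Fin l.length) (Fin l.length) ℤ :=
  fun i j => Fent p (l.get i) (l.get j)

lemma Qdet (p : ℕ) (hp : 1 ≤ p) :
    ∀ (rest : List ℕ) (x b : ℕ), x ≤ b → List.Chain (· < ·) b rest →
      (Qmat p x b rest).det = ec p (b + 1 - x) b rest := by
  intro rest
  induction rest with
  | nil =>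
    intro x b hxb _
    rw [Matrix.det_fin_one]
    show Fent p x b = _
    rw [Fent_le hxb]; rfl
  | cons a t ih =>
    intro x b hxb hch
    change List.IsChain (· < ·) (b :: a :: t) at hch
    rw [List.isChain_cons_cons] at hch
    obtain ⟨hba, hch⟩ := hch
    have hgt : ∀ y ∈ t, a < y := by
      have := (List.isChain_iff_pairwise.mp hch)
      intro y hy; exact List.rel_of_pairwise_cons this hy
    rw [Matrix.det_succ_column_zero, Fin.sum_univ_succ]
    simp only [List.length_cons]
    rw [Fin.sum_univ_succ]
    have h0 : Qmat p x b (a :: t) 0 0 = if p ≤ b + 1 - x then 1 else 0 := Fent_le hxb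
    have h1 : Qmat p x b (a :: t) (Fin.succ (0 : Fin (t.length + 1))) 0 = if a = b + 1 then -1 else 0 := Fent_gt hp hba
    have hrest : ∀ i : Fin t.length,
        Qmat p x b (a :: t) i.succ.succ 0 = 0 := by
      intro i
      have : Qmat p x b (a :: t) i.succ.succ 0 = Fent p (t.get i) b := rfl
      have hmem : t.get i ∈ t := by
        have := List.get_mem t i
        simpa using this
      rw [this, Fent_of_lt hp (by have := hgt _ hmem; omega)]
    rw [Finset.sum_eq_zero (by intro i _; rw [hrest i]; ring)]
    have hsub0 : (Qmat p x b (a :: t)).submatrix (Fin.succAbove 0) Fin.succ = Qmat p a a t := by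
      ext i j
      simp only [Matrix.submatrix_apply, Fin.succAbove_zero]
      rfl
    have hsub1 : (Qmat p x b (a :: t)).submatrix (Fin.succ (0 : Fin (t.length+1))).succAbove Fin.succ = Qmat p x a t := by
      ext i j
      simp only [Matrix.submatrix_apply]
      match i with
      | ⟨0, h⟩ => rfl
      | ⟨m+1, h⟩ => rfl
    rw [hsub0, hsub1, h0, h1, ih a a le_rfl hch, ih x a (by omega) hch]
    show _ = ec p (b + 1 - x) b (a :: t)
    rw [ec]
    simp only [Fin.val_zero, Fin.val_succ, pow_zero, pow_one, add_zero, zero_add]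
    have : a + 1 - a = 1 := by omega
    rw [this]
    by_cases hab : a = b + 1
    · have : a + 1 - x = (b + 1 - x) + 1 := by omega
      rw [if_pos hab, if_pos hab, this]
      split_ifs <;> ring
    · rw [if_neg hab, if_neg hab]
      split_ifs <;> ring

lemma Pdet (p : ℕ) (hp : 1 ≤ p) (l : List ℕ) (hl : List.Chain' (· < ·) l) :
    (Pmat p l).det = pc p l := by
  match l with
  | [] => exact Matrix.det_fin_zero
  | a :: t =>
    have : Pmat p (a :: t) = Qmat p a a t := rfl
    rw [this]
    refine (Qdet p hp t a a le_rfl hl).trans ?_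
    rw [show a + 1 - a = 1 by omega, pc]

lemma sort_map_val {n : ℕ} (s : Finset (Fin n)) :
    ((s.map Fin.valEmbedding).sort (· ≤ ·)) = (s.sort (· ≤ ·)).map Fin.val := by
  refine (fun h1 h2 => List.Perm.eq_of_pairwise' (Finset.pairwise_sort _ _) h2 h1) ?_ ?_
  · rw [← Multiset.coe_eq_coe, Finset.sort_eq, Finset.map_val]
    have : s.val = ↑(s.sort (· ≤ ·)) := (Finset.sort_eq s _).symm
    rw [this, Multiset.map_coe]
    rfl
  · exact List.Pairwise.map _ (fun a b (h : a ≤ b) => h) (Finset.pairwise_sort s _)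

lemma det_sub_eq (n p : ℕ) (s : Finset (Fin n)) :
    Matrix.det (Matrix.of (fun a b : {x : Fin n // x ∈ s} => F n p a.1 b.1))
      = (Pmat p ((s.sort (· ≤ ·)).map Fin.val)).det := by
  set L := (s.sort (· ≤ ·)).map Fin.val with hLdef
  have hL : s.card = L.length := by simp [hLdef]
  have key : ∀ i : Fin L.length, ((s.orderIsoOfFin hL) i).1.val = L.get i := by
    intro i
    rw [show ((s.orderIsoOfFin hL) i).1 = s.orderEmbOfFin hL i from rfl,
      Finset.orderEmbOfFin_apply]
    simp [hLdef]
  rw [← Matrix.det_submatrix_equiv_self (s.orderIsoOfFin hL).toEquiv]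
  congr 1
  ext i j
  show F n p _ _ = Fent p (L.get i) (L.get j)
  rw [← key i, ← key j]
  rfl

lemma chain'_sortedlist {n : ℕ} (s : Finset (Fin n)) :
    List.Chain' (· < ·) ((s.sort (· ≤ ·)).map Fin.val) := by
  show List.IsChain _ _
  rw [List.isChain_iff_pairwise]
  exact List.Pairwise.map _ (fun a b (h : a < b) => h) (Finset.sortedLT_sort s).pairwise

lemma sum_pc_convert (n m : ℕ) (f : List ℕ → ℤ) :
    ∑ s ∈ (Finset.univ : Finset (Fin n)).powersetCard m, f ((s.sort (· ≤ ·)).map Fin.val)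
      = ∑ s ∈ (Finset.range n).powersetCard m, f (s.sort (· ≤ ·)) := by
  rw [← Nat.Iio_eq_range, ← Fin.map_valEmbedding_univ, Finset.powersetCard_map, Finset.sum_map]
  refine Finset.sum_congr rfl fun s _ => ?_
  simp only [RelEmbedding.coe_toEmbedding, Finset.mapEmbedding_apply, sort_map_val]

lemma ec_shift (p : ℕ) : ∀ (t : List ℕ) (r b : ℕ),
    ec p r (b + 1) (t.map (· + 1)) = ec p r b t := by
  intro t
  induction t with
  | nil => intro r b; rfl
  | cons a t ih =>
    intro r b
    show (if p ≤ r then ec p 1 (a + 1) (t.map (· + 1)) else 0)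
        + (if a + 1 = (b + 1) + 1 then ec p (r + 1) (a + 1) (t.map (· + 1)) else 0) = _
    rw [ih 1 a, ih (r + 1) a, ec]
    congr 1
    by_cases hab : a = b + 1
    · rw [if_pos hab, if_pos (by omega)]
    · rw [if_neg hab, if_neg (by omega)]

lemma pc_shift (p : ℕ) (l : List ℕ) : pc p (l.map (· + 1)) = pc p l := by
  match l with
  | [] => rfl
  | a :: t => show ec p 1 (a + 1) (t.map (· + 1)) = _; rw [ec_shift p t 1 a]; rfl

lemma ec_peel (p : ℕ) : ∀ (t : List ℕ) (r b : ℕ),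
    ec p r b t = ∑ j ∈ Finset.range (t.length + 1),
      if p ≤ r + j ∧ List.take j t = List.range' (b + 1) j then pc p (List.drop j t) else 0 := by
  intro t
  induction t with
  | nil =>
    intro r b
    rw [show ([] : List ℕ).length + 1 = 1 from rfl, Finset.sum_range_one]
    simp [ec, pc]
  | cons a t ih =>
    intro r b
    rw [ec, List.length_cons, Finset.sum_range_succ' _ (t.length + 1)]
    have h0 : (if p ≤ r + 0 ∧ List.take 0 (a :: t) = List.range' (b + 1) 0 then
        pc p (List.drop 0 (a :: t)) else 0) = if p ≤ r then pc p (a :: t) else 0 := by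
      simp
    rw [h0]
    have hstep : ∀ j, (if p ≤ r + (j + 1) ∧ List.take (j + 1) (a :: t) = List.range' (b + 1) (j + 1)
          then pc p (List.drop (j + 1) (a :: t)) else 0)
        = if a = b + 1 then (if p ≤ (r + 1) + j ∧ List.take j t = List.range' (a + 1) j
            then pc p (List.drop j t) else 0) else 0 := by
      intro j
      rw [List.take_succ_cons, List.range'_succ]
      by_cases hab : a = b + 1
      · rw [if_pos hab]
        have hiff : (p ≤ r + (j + 1) ∧
              a :: List.take j t = (b + 1) :: List.range' (b + 1 + 1) j)
            ↔ (p ≤ (r + 1) + j ∧ List.take j t = List.range' (a + 1) j) := by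
          subst hab
          constructor
          · rintro ⟨h1, h2⟩
            rw [List.cons.injEq] at h2
            exact ⟨by omega, h2.2⟩
          · rintro ⟨h1, h2⟩
            exact ⟨by omega, by rw [List.cons.injEq]; exact ⟨rfl, h2⟩⟩
        rw [if_congr hiff rfl rfl]
        rfl
      · rw [if_neg hab, if_neg]
        rintro ⟨-, h2⟩
        rw [List.cons.injEq] at h2
        exact hab h2.1
    rw [Finset.sum_congr rfl (fun j _ => hstep j)]
    have hpc : pc p (a :: t) = ec p 1 a t := rfl
    by_cases hab : a = b + 1
    · simp only [if_pos hab, hpc]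
      rw [← ih (r + 1) a]
      ring
    · simp only [if_neg hab, Finset.sum_const_zero, zero_add, hpc]
      ring

def SLn (n m : ℕ) : Finset (List ℕ) :=
  ((Finset.range n).powersetCard m).image (fun s : Finset ℕ => s.sort (· ≤ ·))

lemma sum_SLn (n m : ℕ) (f : List ℕ → ℤ) :
    ∑ l ∈ SLn n m, f l = ∑ s ∈ (Finset.range n).powersetCard m, f (s.sort (· ≤ ·)) := by
  rw [SLn, Finset.sum_image]
  intro s _ s' _ h
  apply Finset.val_injective
  rw [← Finset.sort_eq s (· ≤ ·), ← Finset.sort_eq s' (· ≤ ·), show s.sort (· ≤ ·) = s'.sort (· ≤ ·) from h]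

lemma mem_SLn {n m : ℕ} {l : List ℕ} :
    l ∈ SLn n m ↔ List.Pairwise (· < ·) l ∧ l.length = m ∧ ∀ x ∈ l, x < n := by
  constructor
  · intro hl
    rw [SLn, Finset.mem_image] at hl
    obtain ⟨s, hs, rfl⟩ := hl
    rw [Finset.mem_powersetCard] at hs
    refine ⟨(Finset.sortedLT_sort s).pairwise, by rw [Finset.length_sort, hs.2], ?_⟩
    intro x hx
    exact Finset.mem_range.mp (hs.1 ((Finset.mem_sort (· ≤ ·)).mp hx))
  · rintro ⟨hpw, hlen, hmem⟩
    rw [SLn, Finset.mem_image]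
    have hnd : l.Nodup := hpw.imp ne_of_lt
    refine ⟨l.toFinset, ?_, ?_⟩
    · rw [Finset.mem_powersetCard]
      constructor
      · intro x hx
        rw [List.mem_toFinset] at hx
        exact Finset.mem_range.mpr (hmem x hx)
      · rw [List.toFinset_card_of_nodup hnd, hlen]
    · exact (List.toFinset_sort (· ≤ ·) hnd).mpr (hpw.imp le_of_lt)

lemma pc_shift_c (p c : ℕ) (l : List ℕ) : pc p (l.map (· + c)) = pc p l := by
  induction c with
  | zero =>
    rw [show ((· + 0) : ℕ → ℕ) = id from funext fun x => rfl, List.map_id]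
  | succ c ih =>
    have : l.map (· + (c + 1)) = (l.map (· + c)).map (· + 1) := by
      rw [List.map_map]; rfl
    rw [this, pc_shift, ih]

lemma eq_cons_of_zero_mem {l : List ℕ} (hpw : List.Pairwise (· < ·) l) (h0 : (0 : ℕ) ∈ l) :
    l = 0 :: l.tail := by
  match l with
  | [] => cases h0
  | a :: t =>
    rcases List.mem_cons.mp h0 with h | h
    · rw [← h]; rfl
    · exact absurd (List.rel_of_pairwise_cons hpw h) (by omega)

def G (p : ℕ) : ℕ → ℕ → ℤ
  | 0, 0 => 1
  | 0, _ + 1 => 0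
  | n + 1, 0 => ∑ j ∈ Finset.range (n + 1), if p ≤ j + 1 then G p (n - j) 0 else 0
  | n + 1, k + 1 =>
      G p n k + ∑ j ∈ Finset.range (n + 1), if p ≤ j + 1 then G p (n - j) (k + 1) else 0
  termination_by n _ => n
  decreasing_by all_goals omega

lemma G_zero (p : ℕ) : ∀ n k, n < k → G p n k = 0 := by
  intro n
  induction n using Nat.strong_induction_on with
  | _ n ih =>
    intro k hk
    match n, k with
    | 0, k + 1 => rw [G]
    | n + 1, k + 1 =>
      rw [G, ih n (by omega) k (by omega), zero_add]
      refine Finset.sum_eq_zero fun j hj => ?_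
      rw [ih (n - j) (by omega) (k + 1) (by omega)]
      simp

lemma main3 (p : ℕ) (hp : 1 ≤ p) :
    ∀ n, ∀ k ≤ n, ∑ l ∈ SLn n (n - k), pc p l = G p n k := by
  intro n
  induction n using Nat.strong_induction_on with
  | _ n ihn =>
    cases n with
    | zero =>
      intro k hk
      interval_cases k
      rw [SLn, Nat.sub_zero, Finset.range_zero, Finset.powersetCard_zero, Finset.image_singleton,
        Finset.sort_empty, Finset.sum_singleton, G]
      rfl
    | succ n =>
      intro k hk
      set m := n + 1 - k with hm
      classical
      rw [← Finset.sum_filter_add_sum_filter_not (SLn (n+1) m) (fun l => (0:ℕ) ∈ l)]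
      have hA : ∑ l ∈ (SLn (n+1) m).filter (fun l => ¬ (0:ℕ) ∈ l), pc p l
          = ∑ u ∈ SLn n m, pc p u := by
        refine (Finset.sum_nbij' (fun u => u.map (· + 1)) (fun l => l.map (· - 1))
          ?_ ?_ ?_ ?_ ?_).symm
        · intro u hu
          rw [mem_SLn] at hu
          obtain ⟨hpw, hlen, hmem⟩ := hu
          rw [Finset.mem_filter, mem_SLn]
          refine ⟨⟨?_, by simp [hlen], ?_⟩, ?_⟩
          · rw [List.pairwise_map]
            exact hpw.imp (fun h => by omega)
          · intro x hx
            obtain ⟨y, hy, rfl⟩ := List.mem_map.mp hx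
            have := hmem y hy; omega
          · intro h0
            obtain ⟨y, _, hy0⟩ := List.mem_map.mp h0
            omega
        · intro l hl
          rw [Finset.mem_filter, mem_SLn] at hl
          obtain ⟨⟨hpw, hlen, hmem⟩, h0⟩ := hl
          have h1 : ∀ x ∈ l, 1 ≤ x := by
            intro x hx
            rcases Nat.eq_zero_or_pos x with h | h
            · exact absurd (h ▸ hx) h0
            · exact h
          rw [mem_SLn]
          refine ⟨?_, by simp [hlen], ?_⟩
          · rw [List.pairwise_map]
            refine hpw.imp_of_mem ?_
            intro a b ha hb hab
            have := h1 a ha; omega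
          · intro x hx
            obtain ⟨y, hy, rfl⟩ := List.mem_map.mp hx
            have := hmem y hy; have := h1 y hy; omega
        · intro u hu
          show List.map (· - 1) (List.map (· + 1) u) = u
          rw [List.map_map]
          refine Eq.trans (List.map_congr_left fun a _ => ?_) (List.map_id u)
          simp
        · intro l hl
          rw [Finset.mem_filter, mem_SLn] at hl
          obtain ⟨⟨hpw, hlen, hmem⟩, h0⟩ := hl
          have h1 : ∀ x ∈ l, 1 ≤ x := by
            intro x hx
            rcases Nat.eq_zero_or_pos x with h | h
            · exact absurd (h ▸ hx) h0
            · exact h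
          show List.map (· + 1) (List.map (· - 1) l) = l
          rw [List.map_map]
          refine Eq.trans (List.map_congr_left fun a ha => ?_) (List.map_id l)
          have := h1 a ha
          simp only [Function.comp_apply, id_eq]
          omega
        · intro u hu
          exact (pc_shift p u).symm
      have hB : ∑ l ∈ (SLn (n+1) m).filter (fun l => (0:ℕ) ∈ l), pc p l
          = ∑ j ∈ Finset.range (n+1), (if p ≤ j + 1 then G p (n - j) k else 0) := by
        have step1 : ∀ l ∈ (SLn (n+1) m).filter (fun l => (0:ℕ) ∈ l),
            pc p l = ∑ j ∈ Finset.range m,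
              if p ≤ 1 + j then
                (if List.take (j+1) l = List.range' 0 (j+1)
                  then pc p (List.drop (j+1) l) else 0)
              else 0 := by
          intro l hl
          rw [Finset.mem_filter, mem_SLn] at hl
          obtain ⟨⟨hpw, hlen, hmem⟩, h0⟩ := hl
          have hcons := eq_cons_of_zero_mem hpw h0
          have hlt : l.tail.length + 1 = m := by
            rw [hcons] at hlen
            simpa using hlen
          conv_lhs => rw [hcons, pc, ec_peel, hlt]
          refine Finset.sum_congr rfl fun j hj => ?_
          conv_rhs => rw [hcons]
          rw [List.take_succ_cons, List.range'_succ, List.drop_succ_cons]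
          simp only [Nat.zero_add, List.cons.injEq, true_and]
          by_cases h1 : p ≤ 1 + j <;> by_cases h2 : List.take j l.tail = List.range' 1 j <;>
            simp [h1, h2]
        rw [Finset.sum_congr rfl step1, Finset.sum_comm]
        have step3 : ∀ j ∈ Finset.range m,
            (∑ l ∈ (SLn (n+1) m).filter (fun l => (0:ℕ) ∈ l),
              if p ≤ 1 + j then
                (if List.take (j+1) l = List.range' 0 (j+1)
                  then pc p (List.drop (j+1) l) else 0)
              else 0)
            = if p ≤ j + 1 then G p (n - j) k else 0 := by
          intro j hj
          rw [Finset.mem_range] at hj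
          by_cases h1 : p ≤ 1 + j
          swap
          · rw [if_neg (by omega)]
            exact Finset.sum_eq_zero fun l _ => if_neg h1
          rw [if_pos (by omega)]
          rw [Finset.sum_congr rfl (fun l _ => if_pos h1), ← Finset.sum_filter]
          have hjn : j ≤ n := by omega
          have hkn : k ≤ n - j := by omega
          rw [← ihn (n - j) (by omega) k hkn]
          have hsz : (n - j) - k = m - (j + 1) := by omega
          rw [hsz]
          refine Finset.sum_nbij' (fun l => (List.drop (j+1) l).map (· - (j+1)))
            (fun u => List.range' 0 (j+1) ++ u.map (· + (j+1))) ?_ ?_ ?_ ?_ ?_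
          · intro l hl
            rw [Finset.mem_filter, Finset.mem_filter, mem_SLn] at hl
            obtain ⟨⟨⟨hpw, hlen, hmem⟩, h0⟩, htake⟩ := hl
            have hdec : List.range' 0 (j+1) ++ List.drop (j+1) l = l := by
              rw [← htake]; exact List.take_append_drop _ _
            have hpw2 : List.Pairwise (· < ·) (List.range' 0 (j+1) ++ List.drop (j+1) l) := by
              rw [hdec]; exact hpw
            rw [List.pairwise_append] at hpw2
            have hcross : ∀ b ∈ List.drop (j+1) l, j < b := fun b hb =>
              hpw2.2.2 j (List.mem_range'_1.mpr (by omega)) b hb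
            rw [mem_SLn]
            refine ⟨?_, ?_, ?_⟩
            · rw [List.pairwise_map]
              refine hpw2.2.1.imp_of_mem ?_
              intro a b ha hb hab
              have := hcross a ha
              omega
            · rw [List.length_map, List.length_drop, hlen]
            · intro x hx
              obtain ⟨y, hy, rfl⟩ := List.mem_map.mp hx
              have hy1 := hmem y (List.mem_of_mem_drop hy)
              have hy2 := hcross y hy
              omega
          · intro u hu
            rw [mem_SLn] at hu
            obtain ⟨hpw, hlen, hmem⟩ := hu
            rw [Finset.mem_filter, Finset.mem_filter, mem_SLn]
            have htk : List.take (j+1) (List.range' 0 (j+1) ++ u.map (· + (j+1)))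
                = List.range' 0 (j+1) := by
              exact List.take_left' (by rw [List.length_range'])
            refine ⟨⟨⟨?_, ?_, ?_⟩, ?_⟩, htk⟩
            · rw [List.pairwise_append]
              refine ⟨List.pairwise_lt_range', ?_, ?_⟩
              · rw [List.pairwise_map]
                exact hpw.imp (fun h => by omega)
              · intro a ha b hb
                rw [List.mem_range'_1] at ha
                obtain ⟨y, hy, rfl⟩ := List.mem_map.mp hb
                omega
            · rw [List.length_append, List.length_range', List.length_map, hlen]
              omega
            · intro x hx
              rcases List.mem_append.mp hx with h | h
              · rw [List.mem_range'_1] at h; omega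
              · obtain ⟨y, hy, rfl⟩ := List.mem_map.mp h
                have := hmem y hy; omega
            · exact List.mem_append.mpr (Or.inl (List.mem_range'_1.mpr (by omega)))
          · intro l hl
            rw [Finset.mem_filter, Finset.mem_filter, mem_SLn] at hl
            obtain ⟨⟨⟨hpw, hlen, hmem⟩, h0⟩, htake⟩ := hl
            have hdec : List.range' 0 (j+1) ++ List.drop (j+1) l = l := by
              rw [← htake]; exact List.take_append_drop _ _
            have hpw2 : List.Pairwise (· < ·) (List.range' 0 (j+1) ++ List.drop (j+1) l) := by
              rw [hdec]; exact hpw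
            rw [List.pairwise_append] at hpw2
            have hcross : ∀ b ∈ List.drop (j+1) l, j < b := fun b hb =>
              hpw2.2.2 j (List.mem_range'_1.mpr (by omega)) b hb
            show List.range' 0 (j+1) ++ List.map (· + (j+1)) (List.map (· - (j+1)) (List.drop (j+1) l)) = l
            rw [List.map_map]
            have hone : List.map ((· + (j+1)) ∘ (· - (j+1))) (List.drop (j+1) l)
                = List.drop (j+1) l := by
              refine Eq.trans (List.map_congr_left fun a ha => ?_) (List.map_id _)
              have := hcross a ha
              simp only [Function.comp_apply, id_eq]
              omega
            rw [hone, hdec]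
          · intro u hu
            show List.map (· - (j+1)) (List.drop (j+1) (List.range' 0 (j+1) ++ List.map (· + (j+1)) u)) = u
            rw [List.drop_left' (by rw [List.length_range']), List.map_map]
            refine Eq.trans (List.map_congr_left fun a ha => ?_) (List.map_id u)
            simp only [Function.comp_apply, id_eq]
            omega
          · intro l hl
            rw [Finset.mem_filter, Finset.mem_filter, mem_SLn] at hl
            obtain ⟨⟨⟨hpw, hlen, hmem⟩, h0⟩, htake⟩ := hl
            have hdec : List.range' 0 (j+1) ++ List.drop (j+1) l = l := by
              rw [← htake]; exact List.take_append_drop _ _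
            have hpw2 : List.Pairwise (· < ·) (List.range' 0 (j+1) ++ List.drop (j+1) l) := by
              rw [hdec]; exact hpw
            rw [List.pairwise_append] at hpw2
            have hcross : ∀ b ∈ List.drop (j+1) l, j < b := fun b hb =>
              hpw2.2.2 j (List.mem_range'_1.mpr (by omega)) b hb
            have hrec : List.map (· + (j+1)) ((List.drop (j+1) l).map (· - (j+1)))
                = List.drop (j+1) l := by
              rw [List.map_map]
              refine Eq.trans (List.map_congr_left fun a ha => ?_) (List.map_id _)
              have := hcross a ha
              simp only [Function.comp_apply, id_eq]
              omega
            show pc p (List.drop (j+1) l) = pc p (List.map (· - (j+1)) (List.drop (j+1) l))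
            rw [← pc_shift_c p (j+1) ((List.drop (j+1) l).map (· - (j+1))), hrec]
        rw [Finset.sum_congr rfl step3]
        refine Finset.sum_subset (Finset.range_subset_range.mpr (by omega)) ?_
        intro j hj hj2
        rw [Finset.mem_range] at hj
        rw [Finset.mem_range, not_lt] at hj2
        rw [G_zero p (n - j) k (by omega)]
        simp
      rw [hA, hB]
      cases k with
      | zero =>
        have h0 : SLn n m = ∅ := by
          rw [SLn, Finset.powersetCard_eq_empty.mpr (by rw [Finset.card_range]; omega),
            Finset.image_empty]
        rw [h0, Finset.sum_empty, add_zero, G]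
      | succ k' =>
        have hm' : m = n - k' := by omega
        rw [hm', ihn n (by omega) k' (by omega), G]
        ring

def CompsF (p : ℕ) : ℕ → ℕ → Finset (List ℕ)
  | m, k =>
    ((if m = 0 ∧ k = 0 then ({[]} : Finset (List ℕ)) else ∅)
    ∪ (match k with
       | 0 => (∅ : Finset (List ℕ))
       | k' + 1 =>
         if p - 1 ≤ m then (CompsF p (m - (p - 1)) k').image (List.cons (p - 1)) else ∅))
    ∪ (Finset.range m).attach.biUnion (fun c =>
        if p ≤ c.1 + 1 then (CompsF p (m - (c.1 + 1)) k).image (List.cons (c.1 + 1)) else ∅)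
  termination_by m k => (m, k)
  decreasing_by
  · rcases Nat.lt_or_ge (m - (p - 1)) m with h | h
    · exact Prod.Lex.left _ _ h
    · have he : m - (p - 1) = m := by omega
      rw [he]
      exact Prod.Lex.right _ (by omega)
  · have := Finset.mem_range.mp c.2
    exact Prod.Lex.left _ _ (by omega)

lemma mem_CompsF_iff (p : ℕ) (l : List ℕ) (m k : ℕ) : l ∈ CompsF p m k ↔
    (l = [] ∧ m = 0 ∧ k = 0)
    ∨ (∃ k' t, k = k' + 1 ∧ p - 1 ≤ m ∧ l = (p - 1) :: t ∧ t ∈ CompsF p (m - (p - 1)) k')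
    ∨ (∃ c t, c < m ∧ p ≤ c + 1 ∧ l = (c + 1) :: t ∧ t ∈ CompsF p (m - (c + 1)) k) := by
  rw [CompsF.eq_def]
  constructor
  · intro h
    rcases Finset.mem_union.mp h with h | h
    · rcases Finset.mem_union.mp h with h | h
      · left
        split_ifs at h with hmk
        · exact ⟨Finset.mem_singleton.mp h, hmk.1, hmk.2⟩
        · exact absurd h (Finset.notMem_empty _)
      · right; left
        match k, h with
        | 0, h => exact absurd h (Finset.notMem_empty _)
        | k' + 1, h =>
          split_ifs at h with hpm
          · obtain ⟨t, ht, rfl⟩ := Finset.mem_image.mp h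
            exact ⟨k', t, rfl, hpm, rfl, ht⟩
          · exact absurd h (Finset.notMem_empty _)
    · right; right
      obtain ⟨c, -, hc⟩ := Finset.mem_biUnion.mp h
      split_ifs at hc with hpc
      · obtain ⟨t, ht, rfl⟩ := Finset.mem_image.mp hc
        exact ⟨c.1, t, Finset.mem_range.mp c.2, hpc, rfl, ht⟩
      · exact absurd hc (Finset.notMem_empty _)
  · rintro (⟨rfl, rfl, rfl⟩ | ⟨k', t, rfl, hpm, rfl, ht⟩ | ⟨c, t, hc, hpc, rfl, ht⟩)
    · refine Finset.mem_union.mpr (Or.inl (Finset.mem_union.mpr (Or.inl ?_)))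
      rw [if_pos ⟨rfl, rfl⟩]
      exact Finset.mem_singleton_self _
    · refine Finset.mem_union.mpr (Or.inl (Finset.mem_union.mpr (Or.inr ?_)))
      show _ ∈ (if p - 1 ≤ m then (CompsF p (m - (p - 1)) k').image (List.cons (p - 1)) else ∅)
      rw [if_pos hpm]
      exact Finset.mem_image_of_mem _ ht
    · refine Finset.mem_union.mpr (Or.inr ?_)
      refine Finset.mem_biUnion.mpr ⟨⟨c, Finset.mem_range.mpr hc⟩, Finset.mem_attach _ _, ?_⟩
      rw [if_pos hpc]
      exact Finset.mem_image_of_mem _ ht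

lemma mem_CompsF (p : ℕ) (hp : 1 ≤ p) :
    ∀ (l : List ℕ) (m k : ℕ), l ∈ CompsF p m k ↔
      (l.sum = m ∧ l.count (p - 1) = k ∧ ∀ x ∈ l, x = p - 1 ∨ p ≤ x) := by
  intro l
  induction l with
  | nil =>
    intro m k
    rw [mem_CompsF_iff]
    constructor
    · rintro (⟨-, rfl, rfl⟩ | ⟨k', t, -, -, h, -⟩ | ⟨c, t, -, -, h, -⟩)
      · exact ⟨rfl, rfl, by intro x hx; cases hx⟩
      · cases h
      · cases h
    · rintro ⟨h1, h2, -⟩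
      exact Or.inl ⟨rfl, h1.symm, h2.symm⟩
  | cons a t ih =>
    intro m k
    rw [mem_CompsF_iff]
    constructor
    · rintro (⟨h, -, -⟩ | ⟨k', t', hk, hpm, he, ht⟩ | ⟨c, t', hc, hpc, he, ht⟩)
      · cases h
      · obtain ⟨rfl, rfl⟩ : a = p - 1 ∧ t = t' :=
          ⟨List.head_eq_of_cons_eq he, List.tail_eq_of_cons_eq he⟩
        rw [ih] at ht
        obtain ⟨hs, hcnt, hall⟩ := ht
        refine ⟨by rw [List.sum_cons, hs]; omega, ?_, ?_⟩
        · rw [List.count_cons_self, hcnt, hk]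
        · intro x hx
          rcases List.mem_cons.mp hx with rfl | hx
          · exact Or.inl rfl
          · exact hall x hx
      · obtain ⟨rfl, rfl⟩ : a = c + 1 ∧ t = t' :=
          ⟨List.head_eq_of_cons_eq he, List.tail_eq_of_cons_eq he⟩
        rw [ih] at ht
        obtain ⟨hs, hcnt, hall⟩ := ht
        refine ⟨by rw [List.sum_cons, hs]; omega, ?_, ?_⟩
        · rw [List.count_cons_of_ne (by omega), hcnt]
        · intro x hx
          rcases List.mem_cons.mp hx with rfl | hx
          · exact Or.inr hpc
          · exact hall x hx
    · rintro ⟨hs, hcnt, hall⟩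
      rw [List.sum_cons] at hs
      rcases hall a List.mem_cons_self with ha | ha
      · right; left
        rw [ha] at hs hcnt
        rw [List.count_cons_self] at hcnt
        refine ⟨t.count (p - 1), t, by omega, by omega, by rw [ha], ?_⟩
        rw [ih]
        exact ⟨by omega, rfl, fun x hx => hall x (List.mem_cons_of_mem _ hx)⟩
      · right; right
        refine ⟨a - 1, t, by omega, by omega, by rw [show a - 1 + 1 = a from by omega], ?_⟩
        rw [ih]
        have : a - 1 + 1 = a := by omega
        rw [this]
        refine ⟨by omega, ?_, fun x hx => hall x (List.mem_cons_of_mem _ hx)⟩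
        rw [List.count_cons_of_ne (by omega)] at hcnt
        exact hcnt

lemma le_sum_of_all (c : ℕ) : ∀ l : List ℕ, (∀ x ∈ l, c ≤ x) → c * l.length ≤ l.sum := by
  intro l
  induction l with
  | nil => simp
  | cons a t ih =>
    intro h
    rw [List.sum_cons, List.length_cons, Nat.mul_succ]
    have h1 := h a List.mem_cons_self
    have h2 := ih fun x hx => h x (List.mem_cons_of_mem _ hx)
    omega

lemma CompsF_empty (p : ℕ) (hp : 1 ≤ p) (m k : ℕ) (h : m < k * (p - 1)) :
    CompsF p m k = ∅ := by
  rw [Finset.eq_empty_iff_forall_notMem]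
  intro l hl
  rw [mem_CompsF p hp] at hl
  obtain ⟨hs, hcnt, hall⟩ := hl
  have h1 : ∀ x ∈ l, p - 1 ≤ x := fun x hx => by rcases hall x hx with h' | h' <;> omega
  have h2 := le_sum_of_all (p - 1) l h1
  have h3 : l.count (p - 1) ≤ l.length := List.count_le_length
  have h4 : (p - 1) * l.count (p - 1) ≤ (p - 1) * l.length := Nat.mul_le_mul_left _ h3
  rw [hcnt] at h4
  rw [hs] at h2
  have h5 : k * (p - 1) = (p - 1) * k := Nat.mul_comm _ _
  omega

lemma memC_shape (p m k c : ℕ) (l : List ℕ)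
    (h : l ∈ (if p ≤ c + 1 then (CompsF p (m - (c + 1)) k).image (List.cons (c + 1)) else ∅)) :
    p ≤ c + 1 ∧ ∃ t, l = (c + 1) :: t := by
  split_ifs at h with h'
  · obtain ⟨t, -, ht⟩ := Finset.mem_image.mp h
    exact ⟨h', t, ht.symm⟩
  · exact absurd h (Finset.notMem_empty _)

lemma card_C (p m k : ℕ) :
    ((Finset.range m).attach.biUnion (fun c =>
        if p ≤ c.1 + 1 then (CompsF p (m - (c.1 + 1)) k).image (List.cons (c.1 + 1)) else ∅)).card
      = ∑ c ∈ Finset.range m, (if p ≤ c + 1 then (CompsF p (m - (c + 1)) k).card else 0) := by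
  classical
  have hdC : ∀ x ∈ (Finset.range m).attach, ∀ y ∈ (Finset.range m).attach, x ≠ y →
      Disjoint
        (if p ≤ x.1 + 1 then (CompsF p (m - (x.1 + 1)) k).image (List.cons (x.1 + 1)) else ∅)
        (if p ≤ y.1 + 1 then (CompsF p (m - (y.1 + 1)) k).image (List.cons (y.1 + 1)) else ∅) := by
    intro x _ y _ hxy
    rw [Finset.disjoint_left]
    intro l h1 h2
    obtain ⟨-, t, rfl⟩ := memC_shape p m k x.1 _ h1
    obtain ⟨-, t', he⟩ := memC_shape p m k y.1 _ h2
    have : x.1 + 1 = y.1 + 1 := List.head_eq_of_cons_eq he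
    exact hxy (Subtype.ext (by omega))
  rw [Finset.card_biUnion hdC,
    ← Finset.sum_attach (Finset.range m)
      (fun c => if p ≤ c + 1 then (CompsF p (m - (c + 1)) k).card else 0)]
  refine Finset.sum_congr rfl fun c _ => ?_
  split_ifs with h'
  · exact Finset.card_image_of_injective _ (List.cons_injective)
  · simp

lemma card_CompsF_zero (p m : ℕ) :
    (CompsF p m 0).card
      = (if m = 0 then 1 else 0)
        + ∑ c ∈ Finset.range m, (if p ≤ c + 1 then (CompsF p (m - (c + 1)) 0).card else 0) := by
  classical
  have hu : CompsF p m 0 = ((if m = 0 ∧ 0 = 0 then ({[]} : Finset (List ℕ)) else ∅)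
      ∪ (∅ : Finset (List ℕ)))
      ∪ (Finset.range m).attach.biUnion (fun c =>
          if p ≤ c.1 + 1 then (CompsF p (m - (c.1 + 1)) 0).image (List.cons (c.1 + 1)) else ∅) := by
    rw [CompsF.eq_def]
  have hd : Disjoint
      ((if m = 0 ∧ 0 = 0 then ({[]} : Finset (List ℕ)) else ∅) ∪ (∅ : Finset (List ℕ)))
      ((Finset.range m).attach.biUnion (fun c =>
          if p ≤ c.1 + 1 then (CompsF p (m - (c.1 + 1)) 0).image (List.cons (c.1 + 1)) else ∅)) := by
    rw [Finset.disjoint_left]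
    intro l h1 h2
    obtain ⟨c, -, hc⟩ := Finset.mem_biUnion.mp h2
    obtain ⟨-, t, rfl⟩ := memC_shape p m 0 c.1 _ hc
    rcases Finset.mem_union.mp h1 with h | h
    · split_ifs at h with h'
      · cases Finset.mem_singleton.mp h
      · exact absurd h (Finset.notMem_empty _)
    · exact absurd h (Finset.notMem_empty _)
  rw [hu, Finset.card_union_of_disjoint hd, Finset.union_empty, card_C]
  congr 1
  by_cases h : m = 0
  · rw [if_pos ⟨h, rfl⟩, if_pos h]
    exact Finset.card_singleton _
  · rw [if_neg (by tauto), if_neg h]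
    exact Finset.card_empty

lemma card_CompsF_succ (p m k' : ℕ) :
    (CompsF p m (k' + 1)).card
      = (if p - 1 ≤ m then (CompsF p (m - (p - 1)) k').card else 0)
        + ∑ c ∈ Finset.range m,
            (if p ≤ c + 1 then (CompsF p (m - (c + 1)) (k' + 1)).card else 0) := by
  classical
  have hu : CompsF p m (k' + 1) = ((if m = 0 ∧ k' + 1 = 0 then ({[]} : Finset (List ℕ)) else ∅)
      ∪ (if p - 1 ≤ m then (CompsF p (m - (p - 1)) k').image (List.cons (p - 1)) else ∅))
      ∪ (Finset.range m).attach.biUnion (fun c =>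
          if p ≤ c.1 + 1 then (CompsF p (m - (c.1 + 1)) (k' + 1)).image (List.cons (c.1 + 1))
          else ∅) := by
    rw [CompsF.eq_def]
  rw [if_neg (by omega), Finset.empty_union] at hu
  have hd : Disjoint
      (if p - 1 ≤ m then (CompsF p (m - (p - 1)) k').image (List.cons (p - 1)) else ∅)
      ((Finset.range m).attach.biUnion (fun c =>
          if p ≤ c.1 + 1 then (CompsF p (m - (c.1 + 1)) (k' + 1)).image (List.cons (c.1 + 1))
          else ∅)) := by
    rw [Finset.disjoint_left]
    intro l h1 h2
    obtain ⟨c, -, hc⟩ := Finset.mem_biUnion.mp h2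
    obtain ⟨hpc, t, rfl⟩ := memC_shape p m (k' + 1) c.1 _ hc
    split_ifs at h1 with h'
    · obtain ⟨t', -, ht'⟩ := Finset.mem_image.mp h1
      have : c.1 + 1 = p - 1 := List.head_eq_of_cons_eq ht'.symm
      omega
    · exact absurd h1 (Finset.notMem_empty _)
  rw [hu, Finset.card_union_of_disjoint hd, card_C]
  congr 1
  split_ifs with h'
  · exact Finset.card_image_of_injective _ (List.cons_injective)
  · simp

lemma main2 (p : ℕ) (hp : 1 ≤ p) :
    ∀ n, ∀ k ≤ n, ((CompsF p (n + k * p - 2 * k) k).card : ℤ) = G p n k := by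
  intro n
  induction n using Nat.strong_induction_on with
  | _ n ihn =>
    cases n with
    | zero =>
      intro k hk
      interval_cases k
      rw [show 0 + 0 * p - 2 * 0 = 0 from by omega, card_CompsF_zero, G]
      simp
    | succ n =>
      intro k hk
      have hkp : ∀ j : ℕ, j * p = j * (p - 1) + j := by
        intro j
        have h : p = (p - 1) + 1 := by omega
        calc j * p = j * ((p - 1) + 1) := by rw [← h]
          _ = j * (p - 1) + j := by ring
      cases k with
      | zero =>
        have hm0 : n + 1 + 0 * p - 2 * 0 = n + 1 := by omega
        rw [hm0, card_CompsF_zero, if_neg (by omega), G]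
        rw [Nat.cast_add, Nat.cast_zero, zero_add, Nat.cast_sum]
        refine Finset.sum_congr rfl fun j hj => ?_
        rw [Finset.mem_range] at hj
        split_ifs with h'
        · have hj2 : n + 1 - (j + 1) = n - j + 0 * p - 2 * 0 := by omega
          rw [hj2]
          exact ihn (n - j) (by omega) 0 (by omega)
        · exact Nat.cast_zero
      | succ k' =>
        set m := n + 1 + (k' + 1) * p - 2 * (k' + 1) with hm
        have hK := hkp (k' + 1)
        have hK' := hkp k'
        have hKK : (k' + 1) * (p - 1) = k' * (p - 1) + (p - 1) := by ring
        have hm2 : m = (n - k') + (k' + 1) * (p - 1) := by omega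
        have hp1m : p - 1 ≤ m := by omega
        rw [card_CompsF_succ, if_pos hp1m]
        have hsub : m - (p - 1) = n + k' * p - 2 * k' := by omega
        rw [hsub, Nat.cast_add, Nat.cast_sum, G]
        congr 1
        · exact ihn n (by omega) k' (by omega)
        · have hL : ∑ c ∈ Finset.range m,
              (((if p ≤ c + 1 then (CompsF p (m - (c + 1)) (k' + 1)).card else 0 : ℕ)) : ℤ)
              = ∑ c ∈ Finset.range (n - k'),
              (((if p ≤ c + 1 then (CompsF p (m - (c + 1)) (k' + 1)).card else 0 : ℕ)) : ℤ) := by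
            refine (Finset.sum_subset (Finset.range_subset_range.mpr (by omega)) ?_).symm
            intro c hc hc2
            rw [Finset.mem_range] at hc
            rw [Finset.mem_range, not_lt] at hc2
            rw [CompsF_empty p hp _ _ (by omega)]
            simp
          have hR : ∑ j ∈ Finset.range (n + 1), (if p ≤ j + 1 then G p (n - j) (k' + 1) else 0)
              = ∑ j ∈ Finset.range (n - k'), (if p ≤ j + 1 then G p (n - j) (k' + 1) else 0) := by
            refine (Finset.sum_subset (Finset.range_subset_range.mpr (by omega)) ?_).symm
            intro j hj hj2
            rw [Finset.mem_range] at hj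
            rw [Finset.mem_range, not_lt] at hj2
            rw [G_zero p (n - j) (k' + 1) (by omega)]
            simp
          rw [hL, hR]
          refine Finset.sum_congr rfl fun j hj => ?_
          rw [Finset.mem_range] at hj
          split_ifs with h'
          · have hidx : m - (j + 1) = (n - j) + (k' + 1) * p - 2 * (k' + 1) := by omega
            rw [hidx]
            exact ihn (n - j) (by omega) (k' + 1) (by omega)
          · exact Nat.cast_zero

/-- The sum of all principal minors of order `n - k` of `F_{n,p}` (determinants
of submatrices obtained by keeping an `(n-k)`-element set of rows and columns)
equals the number of compositions of `n + kp - 2k` with exactly `k` parts equal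
to `p - 1` and all other parts `≥ p`. -/
theorem stmt16 (n p k : ℕ) (hn : 0 < n) (hp : 0 < p) (hk : k ≤ n) :
    ∑ s ∈ Finset.univ.powersetCard (n - k),
        Matrix.det (Matrix.of (fun a b : {x : Fin n // x ∈ s} => F n p a.1 b.1)) =
      (Nat.card {l : List ℕ // l.sum = n + k * p - 2 * k ∧
          l.count (p - 1) = k ∧ ∀ x ∈ l, x = p - 1 ∨ p ≤ x} : ℤ) := by
  have h1 : ∀ s ∈ Finset.univ.powersetCard (n - k),
      Matrix.det (Matrix.of (fun a b : {x : Fin n // x ∈ s} => F n p a.1 b.1))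
        = pc p ((s.sort (· ≤ ·)).map Fin.val) := by
    intro s _
    rw [det_sub_eq n p s, Pdet p hp _ (chain'_sortedlist s)]
  rw [Finset.sum_congr rfl h1, sum_pc_convert n (n - k) (pc p), ← sum_SLn n (n - k) (pc p),
    main3 p hp n k hk, ← main2 p hp n k hk]
  have h2 : Nat.card {l : List ℕ // l.sum = n + k * p - 2 * k ∧
      l.count (p - 1) = k ∧ ∀ x ∈ l, x = p - 1 ∨ p ≤ x}
      = (CompsF p (n + k * p - 2 * k) k).card := by
    rw [← Nat.card_eq_finsetCard]
    exact Nat.card_congr (Equiv.subtypeEquivRight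
      (fun l => (mem_CompsF p hp l (n + k * p - 2 * k) k).symm))
  rw [h2]
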